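/- Let 𝓧 ⊆ L¹ contain all simple random variables and let ρ: 𝓧 → [−∞, ∞] be dilatation monotone. If ρ has the Fatou property, then ρ is lower semicontinuous with respect to the relative σ(L¹, 𝓛) topology on 𝓧. -/

import Mathlib

open MeasureTheory Filter Topology

variable {Ω : Type*} [MeasurableSpace Ω]

/-- A finite measurable partition of `Ω` whose members have positive measure. -/
structure FinPartition (μ : Measure Ω) where
  parts : Finset (Set Ω)
  measSet : ∀ A ∈ parts, MeasurableSet A
  pairwiseDisj : ∀ A ∈ parts, ∀ B ∈ parts, A ≠ B → Disjoint A B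
  cover : ⋃ A ∈ parts, A = Set.univ
  pos : ∀ A ∈ parts, 0 < μ A

/-- Conditional expectation of `X` with respect to the finite partition `π`:
`E[X|π] = ∑_{A ∈ π} (∫_A X dμ / μ(A)) 1_A`. -/
noncomputable def pCondExp (μ : Measure Ω) (π : FinPartition μ) (X : Ω → ℝ) : Ω → ℝ :=
  fun ω => ∑ A ∈ π.parts, Set.indicator A (fun _ => (∫ x in A, X x ∂μ) / (μ A).toReal) ω

/-- A simple random variable. -/
def IsSimpleRV (X : Ω → ℝ) : Prop := Measurable X ∧ (Set.range X).Finite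

/-- Membership in the smallest ideal of `L¹` generated by `S`. -/
def MemIdeal (μ : Measure Ω) (S : Set (Ω → ℝ)) (X : Ω → ℝ) : Prop :=
  ∃ (n : ℕ) (Y : Fin n → Ω → ℝ) (l : Fin n → ℝ),
    (∀ i, Y i ∈ S) ∧ (∀ i, 0 ≤ l i) ∧ ∀ᵐ ω ∂μ, |X ω| ≤ ∑ i, l i * |Y i ω|

/-- Dilatation monotonicity of `ρ` on `𝓧`. -/
def DilMono (μ : Measure Ω) (𝓧 : Set (Ω → ℝ)) (ρ : (Ω → ℝ) → EReal) : Prop :=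
  ∀ X ∈ 𝓧, ∀ π : FinPartition μ, ρ (pCondExp μ π X) ≤ ρ X

/-- The Fatou property of `ρ` on `𝓧`. -/
def FatouProp (μ : Measure Ω) (𝓧 : Set (Ω → ℝ)) (ρ : (Ω → ℝ) → EReal) : Prop :=
  ∀ (Xn : ℕ → Ω → ℝ) (X : Ω → ℝ), (∀ n, Xn n ∈ 𝓧) → X ∈ 𝓧 →
    (∀ᵐ ω ∂μ, Tendsto (fun n => Xn n ω) atTop (nhds (X ω))) →
    (∃ Y, MemIdeal μ 𝓧 Y ∧ ∀ᵐ ω ∂μ, ∀ n, |Xn n ω| ≤ Y ω) →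
    ρ X ≤ liminf (fun n => ρ (Xn n)) atTop

/-- Convergence of a net in the `σ(L¹, 𝓛)` topology. -/
def TendstoWeakSimple (μ : Measure Ω) {ι : Type*} (l : Filter ι)
    (Xn : ι → Ω → ℝ) (X : Ω → ℝ) : Prop :=
  ∀ Z : Ω → ℝ, IsSimpleRV Z →
    Tendsto (fun i => ∫ ω, Xn i ω * Z ω ∂μ) l (nhds (∫ ω, X ω * Z ω ∂μ))

/-- The extension `ρ̄(X) = sup_{π ∈ Π} ρ(E[X|π])`. -/
noncomputable def rhoBar (μ : Measure Ω) (ρ : (Ω → ℝ) → EReal) (X : Ω → ℝ) : EReal :=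
  ⨆ π : FinPartition μ, ρ (pCondExp μ π X)

/-- The conjugate `ρ^#(Y) = sup_{X ∈ 𝓛} { E[XY] - ρ(X) }`. -/
noncomputable def sharp (μ : Measure Ω) (ρ : (Ω → ℝ) → EReal) (Y : Ω → ℝ) : EReal :=
  ⨆ X : {X : Ω → ℝ // IsSimpleRV X}, (((∫ ω, X.1 ω * Y ω ∂μ : ℝ) : EReal) - ρ X.1)

/-- The `σ(L¹, 𝓛)` topology on random variables: the topology induced by the maps
`X ↦ ∫ X·Z dμ`, `Z` simple. -/
noncomputable def weakSimpleTopology (μ : Measure Ω) : TopologicalSpace (Ω → ℝ) :=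
  TopologicalSpace.induced
    (fun X => fun Z : {Z : Ω → ℝ // IsSimpleRV Z} => ∫ ω, X ω * Z.1 ω ∂μ)
    Pi.topologicalSpace

section Helpers
variable {μ : Measure Ω}

lemma FinPartition.exists_mem (π : FinPartition μ) (ω : Ω) : ∃ A ∈ π.parts, ω ∈ A := by
  have : ω ∈ ⋃ A ∈ π.parts, A := by rw [π.cover]; trivial
  simpa using this

lemma sum_indicator_eq (π : FinPartition μ) (c : Set Ω → ℝ) {ω : Ω} {A : Set Ω}
    (hA : A ∈ π.parts) (hω : ω ∈ A) :
    ∑ B ∈ π.parts, Set.indicator B (fun _ => c B) ω = c A := by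
  rw [Finset.sum_eq_single_of_mem A hA]
  · exact Set.indicator_of_mem hω _
  · intro B hB hBA
    apply Set.indicator_of_notMem
    intro hωB
    exact (π.pairwiseDisj B hB A hA hBA).le_bot ⟨hωB, hω⟩

lemma sum_indicator_simple (π : FinPartition μ) (c : Set Ω → ℝ) :
    IsSimpleRV (fun ω => ∑ B ∈ π.parts, Set.indicator B (fun _ => c B) ω) := by
  constructor
  · exact Finset.measurable_sum _ fun B hB => (measurable_const.indicator (π.measSet B hB))
  · apply Set.Finite.subset (Set.Finite.image c π.parts.finite_toSet)
    rintro x ⟨ω, rfl⟩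
    obtain ⟨A, hA, hω⟩ := π.exists_mem ω
    show (∑ B ∈ π.parts, Set.indicator B (fun _ => c B) ω) ∈ _
    rw [sum_indicator_eq π c hA hω]
    exact ⟨A, hA, rfl⟩

lemma pCondExp_eq (π : FinPartition μ) (X : Ω → ℝ) {ω : Ω} {A : Set Ω}
    (hA : A ∈ π.parts) (hω : ω ∈ A) :
    pCondExp μ π X ω = (∫ x in A, X x ∂μ) / (μ A).toReal :=
  sum_indicator_eq π (fun B => (∫ x in B, X x ∂μ) / (μ B).toReal) hA hω

lemma pCondExp_simple (π : FinPartition μ) (X : Ω → ℝ) : IsSimpleRV (pCondExp μ π X) :=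
  sum_indicator_simple π _

end Helpers

lemma exists_finPartition (μ : Measure Ω) [IsProbabilityMeasure μ] {f : Ω → ℝ}
    (hf : Measurable f) (hr : (Set.range f).Finite) :
    ∃ π : FinPartition μ, ∀ᵐ ω ∂μ, ∃ A ∈ π.parts,
      ω ∈ A ∧ A =ᵐ[μ] f ⁻¹' {f ω} ∧ 0 < μ (f ⁻¹' {f ω}) := by
  classical
  set G : Set ℝ := {v : ℝ | 0 < μ (f ⁻¹' {v})} with hGdef
  have hGsub : G ⊆ Set.range f := by
    intro v hv
    by_contra hvr
    have : f ⁻¹' {v} = ∅ := by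
      ext ω; simp only [Set.mem_preimage, Set.mem_singleton_iff, Set.mem_empty_iff_false,
        iff_false]
      exact fun h => hvr ⟨ω, h⟩
    have hv' : 0 < μ (f ⁻¹' {v}) := hv
    rw [this] at hv'; simp at hv'
  have hGfin : G.Finite := hr.subset hGsub
  have hGmeas : MeasurableSet G := hGfin.measurableSet
  -- bad set is null
  have hbad : μ (f ⁻¹' Gᶜ) = 0 := by
    have hsub : f ⁻¹' Gᶜ ⊆ ⋃ v ∈ (Set.range f \ G), f ⁻¹' {v} := by
      intro ω hω
      simp only [Set.mem_iUnion]
      exact ⟨f ω, ⟨⟨ω, rfl⟩, hω⟩, rfl⟩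
    refine measure_mono_null hsub ?_
    rw [measure_biUnion_null_iff ((hr.subset Set.diff_subset).countable)]
    intro v hv
    by_contra h
    exact hv.2 (by simp [hGdef, pos_iff_ne_zero, h])
  -- good value exists
  have hGne : G.Nonempty := by
    by_contra h
    rw [Set.not_nonempty_iff_eq_empty] at h
    have : μ (Set.univ : Set Ω) = 0 := by
      refine measure_mono_null (fun ω _ => ?_) hbad
      simp [h]
    simp [measure_univ] at this
  obtain ⟨v₀, hv₀⟩ := hGne
  set f' : Ω → ℝ := fun ω => if f ω ∈ G then f ω else v₀ with hf'def
  have hf'meas : Measurable f' := Measurable.ite (hf hGmeas) hf measurable_const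
  have hf'G : ∀ ω, f' ω ∈ G := by
    intro ω
    by_cases h : f ω ∈ G
    · simpa [hf'def, h] using h
    · simpa [hf'def, h] using hv₀
  -- fiber comparison
  have hfib : ∀ v ∈ G, (f' ⁻¹' {v} \ f ⁻¹' {v}) ⊆ f ⁻¹' Gᶜ ∧
      (f ⁻¹' {v} \ f' ⁻¹' {v}) ⊆ f ⁻¹' Gᶜ := by
    intro v hv
    constructor
    · rintro ω ⟨h1, h2⟩
      simp only [Set.mem_preimage, Set.mem_singleton_iff] at h1 h2
      by_contra hc
      simp only [Set.mem_preimage, Set.mem_compl_iff, not_not] at hc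
      exact h2 (by simpa [hf'def, hc] using h1)
    · rintro ω ⟨h1, h2⟩
      simp only [Set.mem_preimage, Set.mem_singleton_iff] at h1
      by_contra hc
      simp only [Set.mem_preimage, Set.mem_compl_iff, not_not] at hc
      apply h2
      have : f' ω = f ω := by simp [hf'def, hc]
      simp [Set.mem_preimage, this, h1]
  have hfibae : ∀ v ∈ G, (f' ⁻¹' {v} : Set Ω) =ᵐ[μ] f ⁻¹' {v} := by
    intro v hv
    rw [MeasureTheory.ae_eq_set]
    exact ⟨measure_mono_null (hfib v hv).1 hbad, measure_mono_null (hfib v hv).2 hbad⟩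
  refine ⟨⟨hGfin.toFinset.image (fun v => f' ⁻¹' {v}), ?_, ?_, ?_, ?_⟩, ?_⟩
  · intro A hA
    simp only [Finset.mem_image] at hA
    obtain ⟨v, _, rfl⟩ := hA
    exact hf'meas (measurableSet_singleton v)
  · intro A hA B hB hAB
    simp only [Finset.mem_image] at hA hB
    obtain ⟨v, _, rfl⟩ := hA
    obtain ⟨w, _, rfl⟩ := hB
    have hvw : v ≠ w := fun h => hAB (by rw [h])
    rw [Set.disjoint_left]
    intro ω h1 h2
    simp only [Set.mem_preimage, Set.mem_singleton_iff] at h1 h2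
    exact hvw (h1 ▸ h2 ▸ rfl)
  · rw [Set.eq_univ_iff_forall]
    intro ω
    simp only [Set.mem_iUnion, Finset.mem_image]
    exact ⟨f' ⁻¹' {f' ω}, ⟨f' ω, hGfin.mem_toFinset.2 (hf'G ω), rfl⟩, rfl⟩
  · intro A hA
    simp only [Finset.mem_image] at hA
    obtain ⟨v, hv, rfl⟩ := hA
    rw [hGfin.mem_toFinset] at hv
    calc 0 < μ (f ⁻¹' {v}) := hv
    _ = μ (f' ⁻¹' {v}) := (measure_congr (hfibae v hv)).symm
  · -- a.e. conclusion
    have : ∀ᵐ ω ∂μ, f ω ∈ G := by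
      rw [MeasureTheory.ae_iff]
      refine measure_mono_null ?_ hbad
      intro ω hω
      exact hω
    filter_upwards [this] with ω hω
    refine ⟨f' ⁻¹' {f ω}, ?_, ?_, hfibae _ hω, hω⟩
    · simp only [Finset.mem_image]
      exact ⟨f ω, hGfin.mem_toFinset.2 hω, rfl⟩
    · simp [Set.mem_preimage, hf'def, hω]

variable {μ : Measure Ω}

lemma setAvg_mem_Icc [IsFiniteMeasure μ] {T : Ω → ℝ} (hT : Integrable T μ) {A : Set Ω}
    (hAm : MeasurableSet A) (hA : μ A ≠ 0) {a d : ℝ}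
    (hbound : ∀ ω ∈ A, a ≤ T ω ∧ T ω ≤ a + d) :
    (∫ x in A, T x ∂μ) / (μ A).toReal ∈ Set.Icc a (a + d) := by
  have hpos : 0 < (μ A).toReal := ENNReal.toReal_pos hA (measure_ne_top μ A)
  have hInt : IntegrableOn T A μ := hT.integrableOn
  have hconst : IntegrableOn (fun _ => a + d) A μ := (integrable_const _).integrableOn
  have hconst' : IntegrableOn (fun _ => a) A μ := (integrable_const _).integrableOn
  have h1 : (μ A).toReal * a ≤ ∫ x in A, T x ∂μ := by
    have := setIntegral_mono_on hconst' hInt hAm (fun x hx => (hbound x hx).1)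
    rwa [setIntegral_const, smul_eq_mul] at this
  have h2 : ∫ x in A, T x ∂μ ≤ (μ A).toReal * (a + d) := by
    have := setIntegral_mono_on hInt hconst hAm (fun x hx => (hbound x hx).2)
    rwa [setIntegral_const, smul_eq_mul] at this
  constructor
  · rw [le_div_iff₀ hpos]; linarith
  · rw [div_le_iff₀ hpos]; linarith

lemma tendsto_tail_integral {T : Ω → ℝ} (hTm : Measurable T) (hT : Integrable T μ) :
    Tendsto (fun n : ℕ => ∫ ω in {ω | (n : ℝ) ≤ |T ω|}, |T ω| ∂μ) atTop (𝓝 0) := by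
  have habs : Integrable (fun ω => |T ω|) μ := hT.abs
  have key : Tendsto (fun n : ℕ => ∫ ω, Set.indicator {ω | (n : ℝ) ≤ |T ω|}
      (fun ω => |T ω|) ω ∂μ) atTop (𝓝 (∫ ω, (0 : ℝ) ∂μ)) := by
    refine tendsto_integral_of_dominated_convergence (fun ω => |T ω|) ?_ habs ?_ ?_
    · intro n
      apply Measurable.aestronglyMeasurable
      exact (hTm.abs.indicator (measurableSet_le measurable_const hTm.abs))
    · intro n
      filter_upwards with ω
      rw [Real.norm_eq_abs]
      by_cases h : ω ∈ {ω | (n : ℝ) ≤ |T ω|}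
      · rw [Set.indicator_of_mem h]
        exact le_of_eq (abs_abs _)
      · rw [Set.indicator_of_notMem h]
        simp
    · filter_upwards with ω
      have : ∀ᶠ n : ℕ in atTop, Set.indicator {ω | (n : ℝ) ≤ |T ω|} (fun ω => |T ω|) ω = 0 := by
        obtain ⟨N, hN⟩ := exists_nat_gt (|T ω|)
        filter_upwards [eventually_ge_atTop N] with n hn
        apply Set.indicator_of_notMem
        simp only [Set.mem_setOf_eq, not_le]
        calc |T ω| < N := hN
        _ ≤ n := by exact_mod_cast hn
      exact Tendsto.congr'
        (by filter_upwards [this] with n h; exact h.symm)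
        (tendsto_const_nhds : Tendsto (fun _ : ℕ => (0:ℝ)) atTop (𝓝 0))
  have h0 : (∫ ω, (0:ℝ) ∂μ) = 0 := integral_zero _ _
  rw [h0] at key
  apply key.congr
  intro n
  rw [integral_indicator (measurableSet_le measurable_const hTm.abs)]
lemma key_approx [IsProbabilityMeasure μ] {X : Ω → ℝ} (hX : Integrable X μ) :
    ∃ π : ℕ → FinPartition μ,
      (∀ᵐ ω ∂μ, Tendsto (fun n => pCondExp μ (π n) X ω) atTop (𝓝 (X ω))) ∧
      (∀ᵐ ω ∂μ, ∀ n, |pCondExp μ (π n) X ω| ≤ |X ω| + 2) := by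
  classical
  obtain ⟨T, hTsm, hTae⟩ := hX.aestronglyMeasurable
  have hTm : Measurable T := hTsm.measurable
  have hTint : Integrable T μ := hX.congr hTae
  have habs : Integrable (fun ω => |T ω|) μ := hTint.abs
  set slab : ℝ → Set Ω := fun b => {ω | b ≤ |T ω| ∧ |T ω| < b + 1} with hslabdef
  set tail : ℝ → Set Ω := fun M => {ω | M ≤ |T ω|} with htaildef
  have hslabmeas : ∀ b, MeasurableSet (slab b) := fun b =>
    (measurableSet_le measurable_const hTm.abs).inter
      (measurableSet_lt hTm.abs measurable_const)
  have htailmeas : ∀ M, MeasurableSet (tail M) :=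
    fun M => measurableSet_le measurable_const hTm.abs
  have hspec : ∀ n : ℕ, ∃ b M : ℝ, (n : ℝ) ≤ b ∧ b + 1 ≤ M ∧
      (μ (tail M ∪ slab b) = 0 ∨
        (0 < μ (slab b) ∧ ∫ ω in tail M, |T ω| ∂μ ≤ (μ (slab b)).toReal)) := by
    by_cases hU : ∀ m : ℕ, 0 < μ {ω | (m : ℝ) ≤ |T ω|}
    · intro n
      -- find a slab with positive measure above n
      have hdecomp : {ω | (n : ℝ) ≤ |T ω|} ⊆ ⋃ k : ℕ, slab (n + k) := by
        intro ω hω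
        simp only [Set.mem_setOf_eq] at hω
        simp only [Set.mem_iUnion, hslabdef, Set.mem_setOf_eq]
        refine ⟨⌊|T ω| - n⌋₊, ?_, ?_⟩
        · have := Nat.floor_le (sub_nonneg.2 hω)
          linarith
        · have := Nat.lt_floor_add_one (|T ω| - n)
          linarith
      have hk : ∃ k : ℕ, 0 < μ (slab (n + k)) := by
        by_contra h
        push_neg at h
        simp only [le_zero_iff] at h
        have : μ (⋃ k : ℕ, slab ((n : ℝ) + k)) = 0 := by
          rw [measure_iUnion_null_iff]; exact h
        have := measure_mono_null hdecomp this
        exact absurd this (hU n).ne'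
      obtain ⟨k, hk⟩ := hk
      set b : ℝ := (n : ℝ) + k with hbdef
      have hbpos : 0 < (μ (slab b)).toReal :=
        ENNReal.toReal_pos hk.ne' (measure_ne_top _ _)
      have hev : ∀ᶠ m : ℕ in atTop,
          ∫ ω in {ω | (m : ℝ) ≤ |T ω|}, |T ω| ∂μ < (μ (slab b)).toReal :=
        (tendsto_tail_integral hTm hTint).eventually (gt_mem_nhds hbpos)
      obtain ⟨m, hm⟩ := hev.exists
      refine ⟨b, max (b + 1) m, by simp [hbdef], le_max_left _ _, Or.inr ⟨hk, ?_⟩⟩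
      refine le_trans (le_trans ?_ hm.le) le_rfl
      apply setIntegral_mono_set habs.integrableOn
      · filter_upwards with ω using abs_nonneg _
      · apply HasSubset.Subset.eventuallyLE
        intro ω hω
        simp only [htaildef, Set.mem_setOf_eq] at hω ⊢
        exact le_trans (le_max_right _ _) hω
    · push_neg at hU
      obtain ⟨m₀, hm₀⟩ := hU
      rw [le_zero_iff] at hm₀
      intro n
      refine ⟨max (n : ℝ) (m₀ : ℝ), max (n : ℝ) (m₀ : ℝ) + 1, le_max_left _ _, le_rfl,
        Or.inl ?_⟩
      apply measure_mono_null _ hm₀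
      rintro ω (hω | hω)
      · simp only [htaildef, Set.mem_setOf_eq] at hω
        simp only [Set.mem_setOf_eq]
        have : (m₀ : ℝ) ≤ max (n : ℝ) (m₀ : ℝ) + 1 := le_trans (le_max_right _ _) (by linarith)
        linarith
      · exact le_trans (le_max_right _ _) hω.1
  choose b M hnb hbM hbr using hspec
  set R : ℕ → Set Ω := fun n => tail (M n) ∪ slab (b n) with hRdef
  have hRmeas : ∀ n, MeasurableSet (R n) := fun n => (htailmeas _).union (hslabmeas _)
  have hMpos : ∀ n, 0 < M n := fun n =>
    lt_of_lt_of_le (by positivity : (0:ℝ) < (n:ℝ) + 1) (by linarith [hnb n, hbM n])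
  set top : ℕ → ℝ := fun n => 2 ^ n * M n + 2 with htopdef
  set f : ℕ → Ω → ℝ := fun n ω =>
    if ω ∈ R n then top n else ((⌊2 ^ n * T ω⌋ : ℤ) : ℝ) with hfdef
  have hfmeas : ∀ n, Measurable (f n) := by
    intro n
    apply Measurable.ite (hRmeas n) measurable_const
    exact (measurable_of_countable (fun k : ℤ => (k : ℝ))).comp
      ((hTm.const_mul _).floor)
  -- basic floor bound off R n
  have hfloor_lt : ∀ n ω, ω ∉ R n → ((⌊2 ^ n * T ω⌋ : ℤ) : ℝ) < top n := by
    intro n ω hω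
    simp only [hRdef, Set.mem_union, htaildef, hslabdef, Set.mem_setOf_eq, not_or] at hω
    have h1 : |T ω| < M n := lt_of_not_ge hω.1
    have h2 : (2:ℝ) ^ n * T ω ≤ 2 ^ n * |T ω| :=
      mul_le_mul_of_nonneg_left (le_abs_self _) (by positivity)
    have h3 : (2:ℝ) ^ n * |T ω| < 2 ^ n * M n :=
      mul_lt_mul_of_pos_left h1 (by positivity)
    calc ((⌊2 ^ n * T ω⌋ : ℤ) : ℝ) ≤ 2 ^ n * T ω := Int.floor_le _
    _ < 2 ^ n * M n := lt_of_le_of_lt h2 h3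
    _ < top n := by
      show (2:ℝ) ^ n * M n < 2 ^ n * M n + 2
      linarith
  have hfrange : ∀ n, (Set.range (f n)).Finite := by
    intro n
    apply Set.Finite.subset
      (Set.Finite.insert (top n)
        ((Set.finite_Icc (⌊-(2 ^ n * M n)⌋ : ℤ) ⌈2 ^ n * M n⌉).image (fun k : ℤ => (k : ℝ))))
    rintro x ⟨ω, rfl⟩
    by_cases hω : ω ∈ R n
    · simp [hfdef, hω]
    · have h1 : |T ω| < M n := by
        simp only [hRdef, Set.mem_union, htaildef, hslabdef, Set.mem_setOf_eq, not_or] at hω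
        exact lt_of_not_ge hω.1
      simp only [hfdef, hω, if_false]
      apply Set.mem_insert_of_mem
      refine ⟨⌊2 ^ n * T ω⌋, ?_, rfl⟩
      simp only [Set.mem_Icc]
      constructor
      · apply Int.floor_mono
        have : -(2 ^ n * M n) ≤ 2 ^ n * T ω := by
          have := neg_abs_le (T ω)
          have h2 : (2:ℝ) ^ n * (-|T ω|) ≤ 2 ^ n * T ω :=
            mul_le_mul_of_nonneg_left this (by positivity)
          have h3 : -(2 ^ n * M n) ≤ 2 ^ n * (-|T ω|) := by
            rw [mul_neg, neg_le_neg_iff]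
            exact mul_le_mul_of_nonneg_left h1.le (by positivity)
          linarith
        exact this
      · calc ⌊2 ^ n * T ω⌋ ≤ ⌈2 ^ n * T ω⌉ := Int.floor_le_ceil _
        _ ≤ ⌈2 ^ n * M n⌉ := Int.ceil_mono (le_trans
            (mul_le_mul_of_nonneg_left (le_abs_self _) (by positivity))
            (mul_le_mul_of_nonneg_left h1.le (by positivity)))
  have hπ : ∀ n, ∃ π : FinPartition μ, ∀ᵐ ω ∂μ, ∃ A ∈ π.parts,
      ω ∈ A ∧ A =ᵐ[μ] f n ⁻¹' {f n ω} ∧ 0 < μ (f n ⁻¹' {f n ω}) :=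
    fun n => exists_finPartition μ (hfmeas n) (hfrange n)
  choose π hπae using hπ
  have hRlow : ∀ n ω, ω ∈ R n → b n ≤ |T ω| := by
    intro n ω hω
    rcases hω with hω | hω
    · have : M n ≤ |T ω| := hω
      linarith [hbM n]
    · exact hω.1
  -- the main pointwise claim
  have claim : ∀ᵐ ω ∂μ, ∀ n,
      |pCondExp μ (π n) X ω - T ω| ≤ ((2:ℝ) ^ n)⁻¹ ∨
      (ω ∈ R n ∧ |pCondExp μ (π n) X ω| ≤ b n + 2) := by
    rw [MeasureTheory.ae_all_iff]
    intro n
    filter_upwards [hπae n] with ω hω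
    obtain ⟨A, hA, hωA, hAfib, hfibpos⟩ := hω
    have hPCE : pCondExp μ (π n) X ω = (∫ x in A, X x ∂μ) / (μ A).toReal :=
      pCondExp_eq _ _ hA hωA
    have hIA : ∫ x in A, X x ∂μ = ∫ x in f n ⁻¹' {f n ω}, T x ∂μ :=
      (setIntegral_congr_set hAfib).trans (integral_congr_ae (ae_restrict_of_ae hTae))
    have hμA : μ A = μ (f n ⁻¹' {f n ω}) := measure_congr hAfib
    by_cases hωR : ω ∈ R n
    · right
      refine ⟨hωR, ?_⟩
      have hfω : f n ω = top n := if_pos hωR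
      have hfib_eq : f n ⁻¹' {f n ω} = R n := by
        ext ω'
        simp only [Set.mem_preimage, Set.mem_singleton_iff, hfω]
        constructor
        · intro h
          by_contra hR
          have heq : f n ω' = ((⌊2 ^ n * T ω'⌋ : ℤ) : ℝ) := if_neg hR
          rw [heq] at h
          exact absurd h (ne_of_lt (hfloor_lt n ω' hR))
        · intro h
          exact if_pos h
      have hRpos : 0 < μ (R n) := hfib_eq ▸ hfibpos
      rcases hbr n with h0 | ⟨hsl, htl⟩
      · exact absurd h0 hRpos.ne'
      have hμR : (0:ℝ) < (μ (R n)).toReal :=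
        ENNReal.toReal_pos hRpos.ne' (measure_ne_top _ _)
      have hdisj : Disjoint (tail (M n)) (slab (b n)) := by
        rw [Set.disjoint_left]
        intro ω' h1 h2
        have h1' : M n ≤ |T ω'| := h1
        have h2' : |T ω'| < b n + 1 := h2.2
        linarith [hbM n]
      have hsplit : ∫ x in R n, |T x| ∂μ =
          ∫ x in tail (M n), |T x| ∂μ + ∫ x in slab (b n), |T x| ∂μ :=
        setIntegral_union hdisj (hslabmeas _) habs.integrableOn habs.integrableOn
      have hslabbound : ∫ x in slab (b n), |T x| ∂μ ≤ (b n + 1) * (μ (slab (b n))).toReal := by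
        have h := setIntegral_mono_on habs.integrableOn
          ((integrable_const (b n + 1)).integrableOn) (hslabmeas (b n))
          (fun x hx => hx.2.le)
        rwa [setIntegral_const, smul_eq_mul, mul_comm] at h
      have hbnn : (0:ℝ) ≤ b n + 2 := by
        have := hnb n
        have h0 : (0:ℝ) ≤ (n:ℝ) := Nat.cast_nonneg n
        linarith
      have hRbound : |∫ x in R n, T x ∂μ| ≤ (b n + 2) * (μ (R n)).toReal := by
        calc |∫ x in R n, T x ∂μ| ≤ ∫ x in R n, |T x| ∂μ := by
              simpa [Real.norm_eq_abs] using
                norm_integral_le_integral_norm (μ := μ.restrict (R n)) T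
        _ = ∫ x in tail (M n), |T x| ∂μ + ∫ x in slab (b n), |T x| ∂μ := hsplit
        _ ≤ (μ (slab (b n))).toReal + (b n + 1) * (μ (slab (b n))).toReal :=
            add_le_add htl hslabbound
        _ = (b n + 2) * (μ (slab (b n))).toReal := by ring
        _ ≤ (b n + 2) * (μ (R n)).toReal := by
            apply mul_le_mul_of_nonneg_left _ hbnn
            exact ENNReal.toReal_mono (measure_ne_top _ _)
              (measure_mono Set.subset_union_right)
      rw [hPCE, hIA, hμA, hfib_eq, abs_div, abs_of_nonneg (ENNReal.toReal_nonneg)]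
      rw [div_le_iff₀ hμR]
      exact hRbound
    · left
      have hfω : f n ω = ((⌊2 ^ n * T ω⌋ : ℤ) : ℝ) := if_neg hωR
      set k : ℤ := ⌊2 ^ n * T ω⌋ with hkdef
      have hfibsub : ∀ ω', ω' ∈ f n ⁻¹' {f n ω} → ω' ∉ R n ∧ ⌊2 ^ n * T ω'⌋ = k := by
        intro ω' h
        simp only [Set.mem_preimage, Set.mem_singleton_iff, hfω] at h
        by_cases hR : ω' ∈ R n
        · exfalso
          have heq : f n ω' = top n := if_pos hR
          rw [heq] at h
          exact absurd h.symm (ne_of_lt (hfloor_lt n ω hωR))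
        · refine ⟨hR, ?_⟩
          have heq : f n ω' = ((⌊2 ^ n * T ω'⌋ : ℤ) : ℝ) := if_neg hR
          rw [heq] at h
          exact_mod_cast h
      have hbound : ∀ ω' ∈ f n ⁻¹' {f n ω},
          (k : ℝ) / 2 ^ n ≤ T ω' ∧ T ω' ≤ (k : ℝ) / 2 ^ n + ((2:ℝ) ^ n)⁻¹ := by
        intro ω' h
        obtain ⟨-, hk⟩ := hfibsub ω' h
        have h1 : (k : ℝ) ≤ 2 ^ n * T ω' := by
          rw [← hk]; exact Int.floor_le _
        have h2 : 2 ^ n * T ω' < (k : ℝ) + 1 := by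
          rw [← hk]
          push_cast
          exact Int.lt_floor_add_one _
        have hp : (0:ℝ) < 2 ^ n := by positivity
        constructor
        · rw [div_le_iff₀ hp]; nlinarith
        · have hgoal : T ω' ≤ ((k : ℝ) + 1) / 2 ^ n := by
            rw [le_div_iff₀ hp]; nlinarith
          calc T ω' ≤ ((k : ℝ) + 1) / 2 ^ n := hgoal
          _ = (k : ℝ) / 2 ^ n + ((2:ℝ) ^ n)⁻¹ := by rw [add_div, one_div]
      have havg := setAvg_mem_Icc hTint ((hfmeas n) (measurableSet_singleton (f n ω)))
        hfibpos.ne' hbound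
      have hωfib : ω ∈ f n ⁻¹' {f n ω} := by
        simp only [Set.mem_preimage, Set.mem_singleton_iff]
      have hTmem := hbound ω hωfib
      have hout : pCondExp μ (π n) X ω =
          (∫ x in f n ⁻¹' {f n ω}, T x ∂μ) / (μ (f n ⁻¹' {f n ω})).toReal := by
        rw [hPCE, hIA, hμA]
      rw [hout, abs_sub_le_iff]
      obtain ⟨ha1, ha2⟩ := havg
      constructor <;> linarith [hTmem.1, hTmem.2]
  refine ⟨π, ?_, ?_⟩
  · -- a.e. convergence
    filter_upwards [claim, hTae] with ω hclaim hXT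
    rw [hXT]
    have hev : ∀ᶠ n in atTop, |pCondExp μ (π n) X ω - T ω| ≤ ((2:ℝ) ^ n)⁻¹ := by
      obtain ⟨N, hN⟩ := exists_nat_gt (|T ω|)
      filter_upwards [eventually_ge_atTop N] with n hn
      rcases hclaim n with h | ⟨hR, -⟩
      · exact h
      · exfalso
        have h1 := hRlow n ω hR
        have h2 := hnb n
        have h3 : (N : ℝ) ≤ (n : ℝ) := by exact_mod_cast hn
        linarith
    have h0 : Tendsto (fun n => pCondExp μ (π n) X ω - T ω) atTop (𝓝 0) := by
      apply squeeze_zero_norm' _ ((tendsto_pow_atTop_atTop_of_one_lt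
        (by norm_num : (1:ℝ) < 2)).inv_tendsto_atTop)
      filter_upwards [hev] with n h
      rwa [Real.norm_eq_abs]
    have := h0.add_const (T ω)
    simpa using this
  · -- domination
    filter_upwards [claim, hTae] with ω hclaim hXT
    intro n
    rw [hXT]
    rcases hclaim n with h | ⟨hR, hb2⟩
    · have hone : ((2:ℝ) ^ n)⁻¹ ≤ 1 := by
        rw [inv_le_one_iff₀]
        right
        exact one_le_pow₀ (by norm_num)
      calc |pCondExp μ (π n) X ω| ≤ |pCondExp μ (π n) X ω - T ω| + |T ω| := by
            have := abs_add_le (pCondExp μ (π n) X ω - T ω) (T ω)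
            simpa using this
      _ ≤ |T ω| + 2 := by linarith
    · have h1 := hRlow n ω hR
      linarith

lemma rho_le_level [IsProbabilityMeasure μ] {𝓧 : Set (Ω → ℝ)}
    (h𝓛 : ∀ Z : Ω → ℝ, IsSimpleRV Z → Z ∈ 𝓧) {ρ : (Ω → ℝ) → EReal}
    (hFatou : FatouProp μ 𝓧 ρ) {X : Ω → ℝ} (hX𝓧 : X ∈ 𝓧) (hXi : Integrable X μ)
    {c : EReal} (h : ∀ π : FinPartition μ, ρ (pCondExp μ π X) ≤ c) :
    ρ X ≤ c := by
  obtain ⟨π, hconv, hdom⟩ := key_approx hXi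
  have hmem : ∀ n, pCondExp μ (π n) X ∈ 𝓧 := fun n => h𝓛 _ (pCondExp_simple _ _)
  have hdom' : ∃ Y, MemIdeal μ 𝓧 Y ∧ ∀ᵐ ω ∂μ, ∀ n, |pCondExp μ (π n) X ω| ≤ Y ω := by
    refine ⟨fun ω => |X ω| + 2, ⟨2, ![X, fun _ => 2], ![1, 1], ?_, ?_, ?_⟩, hdom⟩
    · intro i
      fin_cases i
      · exact hX𝓧
      · refine h𝓛 _ ⟨measurable_const, (Set.finite_singleton 2).subset ?_⟩
        rintro x ⟨ω, rfl⟩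
        simp
    · intro i; fin_cases i <;> norm_num
    · filter_upwards with ω
      have h0 : (0:ℝ) ≤ |X ω| + 2 := by positivity
      rw [abs_of_nonneg h0, Fin.sum_univ_two]
      simp only [Matrix.cons_val_zero, Matrix.cons_val_one, Matrix.head_cons]
      rw [abs_two]
      ring_nf
      linarith [abs_nonneg (X ω)]
  have hlim := hFatou (fun n => pCondExp μ (π n) X) X hmem hX𝓧 hconv hdom'
  refine le_trans hlim ?_
  calc liminf (fun n => ρ (pCondExp μ (π n) X)) atTop
      ≤ liminf (fun _ : ℕ => c) atTop :=
        liminf_le_liminf (Eventually.of_forall (fun n => h (π n)))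
  _ = c := liminf_const c

lemma closed_Cpi [IsProbabilityMeasure μ] {𝓧 : Set (Ω → ℝ)}
    (h𝓛 : ∀ Z : Ω → ℝ, IsSimpleRV Z → Z ∈ 𝓧) {ρ : (Ω → ℝ) → EReal}
    (hFatou : FatouProp μ 𝓧 ρ) (c : EReal) (π : FinPartition μ) :
    @IsClosed _ (weakSimpleTopology μ) {X : Ω → ℝ | ρ (pCondExp μ π X) ≤ c} := by
  classical
  letI : TopologicalSpace (Ω → ℝ) := weakSimpleTopology μ
  set ι := {A : Set Ω // A ∈ π.parts} with hιdef
  set G : (ι → ℝ) → (Ω → ℝ) := fun v ω => ∑ A ∈ π.parts,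
    Set.indicator A (fun _ => (if h : A ∈ π.parts then v ⟨A, h⟩ else 0) / (μ A).toReal) ω
    with hGdef
  set F : (Ω → ℝ) → (ι → ℝ) := fun X A => ∫ x in A.1, X x ∂μ with hFdef
  have hGF : ∀ X, G (F X) = pCondExp μ π X := by
    intro X
    funext ω
    apply Finset.sum_congr rfl
    intro A hA
    rw [dif_pos hA]
  have hset : {X : Ω → ℝ | ρ (pCondExp μ π X) ≤ c} = F ⁻¹' {v : ι → ℝ | ρ (G v) ≤ c} := by
    ext X
    simp only [Set.mem_setOf_eq, Set.mem_preimage, hGF]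
  rw [hset]
  have hFcont : Continuous F := by
    apply continuous_pi
    intro A
    have hZ : IsSimpleRV (Set.indicator A.1 (fun _ => (1:ℝ))) := by
      constructor
      · exact measurable_const.indicator (π.measSet A.1 A.2)
      · apply (Set.Finite.insert (0:ℝ) (Set.finite_singleton (1:ℝ))).subset
        rintro x ⟨ω, rfl⟩
        by_cases h : ω ∈ A.1
        · simp [Set.indicator_of_mem h]
        · simp [Set.indicator_of_notMem h]
    have hkey : (fun X : Ω → ℝ => ∫ x in A.1, X x ∂μ) =
        (fun v : {Z : Ω → ℝ // IsSimpleRV Z} → ℝ => v ⟨_, hZ⟩) ∘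
        (fun X : Ω → ℝ => fun Z : {Z : Ω → ℝ // IsSimpleRV Z} => ∫ ω, X ω * Z.1 ω ∂μ) := by
      funext X
      simp only [Function.comp_apply]
      rw [← integral_indicator (π.measSet A.1 A.2)]
      apply integral_congr_ae
      filter_upwards with ω
      by_cases h : ω ∈ A.1
      · simp [Set.indicator_of_mem h]
      · simp [Set.indicator_of_notMem h]
    show Continuous fun X : Ω → ℝ => ∫ x in A.1, X x ∂μ
    rw [hkey]
    exact (continuous_apply _).comp continuous_induced_dom
  apply IsClosed.preimage hFcont
  -- now closedness in the finite-dimensional space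
  apply IsSeqClosed.isClosed
  intro x v hmemD htend
  simp only [Set.mem_setOf_eq] at hmemD ⊢
  -- each G (x k) is in 𝓧
  have hGsimple : ∀ w : ι → ℝ, IsSimpleRV (G w) :=
    fun w => sum_indicator_simple π _
  have hval : ∀ (w : ι → ℝ) (ω : Ω), ∀ A : ι, ω ∈ A.1 →
      G w ω = w A / (μ A.1).toReal := by
    intro w ω A hω
    have := sum_indicator_eq π
      (fun B => (if h : B ∈ π.parts then w ⟨B, h⟩ else 0) / (μ B).toReal) A.2 hω
    rw [hGdef]
    simp only at this ⊢
    rw [this, dif_pos A.2]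
  -- coordinatewise bounds
  have hbdd : ∀ A : ι, ∃ C : ℝ, 0 ≤ C ∧ ∀ k, |x k A| ≤ C := by
    intro A
    have h1 : Tendsto (fun k => |x k A|) atTop (𝓝 |v A|) :=
      (tendsto_pi_nhds.1 htend A).abs
    obtain ⟨C, hC⟩ := h1.bddAbove_range
    refine ⟨max C 0, le_max_right _ _, fun k => ?_⟩
    exact le_trans (hC ⟨k, rfl⟩) (le_max_left _ _)
  choose C hC0 hC using hbdd
  set Mtot : ℝ := ∑ A : ι, C A / (μ A.1).toReal with hMdef
  have hMnonneg : 0 ≤ Mtot :=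
    Finset.sum_nonneg fun A _ => div_nonneg (hC0 A) ENNReal.toReal_nonneg
  have hdom : ∀ (k : ℕ) (ω : Ω), |G (x k) ω| ≤ Mtot := by
    intro k ω
    obtain ⟨A, hA, hω⟩ := π.exists_mem ω
    rw [hval (x k) ω ⟨A, hA⟩ hω]
    have hpos : 0 < (μ A).toReal :=
      ENNReal.toReal_pos (π.pos A hA).ne' (measure_ne_top _ _)
    rw [abs_div, abs_of_nonneg ENNReal.toReal_nonneg]
    calc |x k ⟨A, hA⟩| / (μ A).toReal ≤ C ⟨A, hA⟩ / (μ A).toReal := by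
          gcongr
          exact hC ⟨A, hA⟩ k
    _ ≤ Mtot := by
        apply Finset.single_le_sum (f := fun B : ι => C B / (μ B.1).toReal)
          (fun B _ => div_nonneg (hC0 B) ENNReal.toReal_nonneg) (Finset.mem_univ ⟨A, hA⟩)
  -- apply Fatou
  have hFat := hFatou (fun k => G (x k)) (G v)
    (fun k => h𝓛 _ (hGsimple _)) (h𝓛 _ (hGsimple _)) ?conv ?dom
  · refine le_trans hFat ?_
    calc liminf (fun k => ρ (G (x k))) atTop ≤ liminf (fun _ : ℕ => c) atTop :=
          liminf_le_liminf (Eventually.of_forall hmemD)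
    _ = c := liminf_const c
  case conv =>
    filter_upwards with ω
    obtain ⟨A, hA, hω⟩ := π.exists_mem ω
    have hrw : ∀ k, G (x k) ω = x k ⟨A, hA⟩ / (μ A).toReal :=
      fun k => hval (x k) ω ⟨A, hA⟩ hω
    rw [hval v ω ⟨A, hA⟩ hω]
    apply Tendsto.congr (fun k => (hrw k).symm)
    exact (tendsto_pi_nhds.1 htend ⟨A, hA⟩).div_const _
  case dom =>
    refine ⟨fun _ => Mtot, ⟨1, ![fun _ => Mtot], ![1], ?_, ?_, ?_⟩, ?_⟩
    · intro i
      fin_cases i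
      refine h𝓛 _ ⟨measurable_const, (Set.finite_singleton Mtot).subset ?_⟩
      rintro y ⟨ω, rfl⟩
      simp
    · intro i; fin_cases i; norm_num
    · filter_upwards with ω
      rw [Fin.sum_univ_one]
      simp only [Matrix.cons_val_zero]
      rw [abs_of_nonneg hMnonneg]
      nlinarith [abs_nonneg Mtot, le_abs_self Mtot]
    · filter_upwards with ω
      intro k
      exact hdom k ω

/-- If `ρ` on `𝓧 ⊇ 𝓛` is dilatation monotone with the Fatou property, then
`ρ` is lower semicontinuous for the relative `σ(L¹, 𝓛)` topology on `𝓧`: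
all sublevel sets are closed in the subspace topology. -/
theorem stmt3 (μ : Measure Ω) [IsProbabilityMeasure μ] [NullSingletonClass μ]
    (𝓧 : Set (Ω → ℝ)) (h𝓧L1 : ∀ X ∈ 𝓧, Integrable X μ)
    (h𝓛 : ∀ Z : Ω → ℝ, IsSimpleRV Z → Z ∈ 𝓧)
    (ρ : (Ω → ℝ) → EReal)
    (hdil : DilMono μ 𝓧 ρ) (hFatou : FatouProp μ 𝓧 ρ) :
    ∀ c : ℝ,
      @IsClosed {X // X ∈ 𝓧}
        (TopologicalSpace.induced Subtype.val (weakSimpleTopology μ))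
        {x : {X // X ∈ 𝓧} | ρ x.1 ≤ (c : EReal)} := by
  intro c
  letI : TopologicalSpace (Ω → ℝ) := weakSimpleTopology μ
  letI : TopologicalSpace {X // X ∈ 𝓧} :=
    TopologicalSpace.induced Subtype.val (weakSimpleTopology μ)
  show IsClosed {x : {X // X ∈ 𝓧} | ρ x.1 ≤ (c : EReal)}
  have hset : {x : {X // X ∈ 𝓧} | ρ x.1 ≤ (c : EReal)} =
      Subtype.val ⁻¹'
        (⋂ π : FinPartition μ, {X : Ω → ℝ | ρ (pCondExp μ π X) ≤ (c : EReal)}) := by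
    ext x
    simp only [Set.mem_setOf_eq, Set.mem_preimage, Set.mem_iInter]
    constructor
    · intro h π
      exact le_trans (hdil x.1 x.2 π) h
    · intro h
      exact rho_le_level h𝓛 hFatou x.2 (h𝓧L1 x.1 x.2) h
  rw [hset]
  have hcont : Continuous (Subtype.val : {X // X ∈ 𝓧} → (Ω → ℝ)) := continuous_induced_dom
  apply IsClosed.preimage hcont
  exact isClosed_iInter (fun π => closed_Cpi h𝓛 hFatou (c : EReal) π)
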